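/- Let 0 < α < 1 and λ ∈ ℂ. For every t > 0, the function t ↦ E_α(λ t^α) is differentiable at t and its derivative equals λ t^{α−1} E_{α,α}(λ t^α). -/

import Mathlib

open Real Filter

private lemma gamma_ratio_aux {α x : ℝ} (hα₀ : 0 < α) (hα₁ : α < 1) (hx : 0 < x) :
    x * Real.Gamma x ≤ (x + α) ^ (1 - α) * Real.Gamma (x + α) := by
  have hxα : 0 < x + α := by linarith
  have hxα1 : 0 < x + α + 1 := by linarith
  have hg : 0 < Real.Gamma (x + α) := Real.Gamma_pos_of_pos hxα
  have hg1 : 0 < Real.Gamma (x + α + 1) := Real.Gamma_pos_of_pos hxα1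
  have hg0 : 0 < Real.Gamma x := Real.Gamma_pos_of_pos hx
  have hcx : α • (x + α) + (1 - α) • (x + α + 1) = x + 1 := by
    simp [smul_eq_mul]; ring
  have h := Real.convexOn_log_Gamma.2 (Set.mem_Ioi.2 hxα) (Set.mem_Ioi.2 hxα1)
      hα₀.le (by linarith : (0:ℝ) ≤ 1 - α) (by ring)
  rw [hcx] at h
  have h' : Real.Gamma (x + 1) ≤ Real.Gamma (x + α) ^ α * Real.Gamma (x + α + 1) ^ (1 - α) := by
    have := Real.exp_le_exp.2 h
    rwa [Function.comp_apply, Function.comp_apply, Function.comp_apply,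
      Real.exp_log (Real.Gamma_pos_of_pos (by linarith : (0:ℝ) < x + 1)),
      smul_eq_mul, smul_eq_mul, Real.exp_add, mul_comm α, mul_comm (1 - α),
      ← Real.rpow_def_of_pos hg, ← Real.rpow_def_of_pos hg1] at this
  rw [Real.Gamma_add_one hx.ne', Real.Gamma_add_one hxα.ne'] at h'
  calc x * Real.Gamma x ≤ Real.Gamma (x + α) ^ α * ((x + α) * Real.Gamma (x + α)) ^ (1 - α) := h'
    _ = (x + α) ^ (1 - α) * Real.Gamma (x + α) := by
        rw [Real.mul_rpow hxα.le hg.le, ← mul_assoc, mul_comm (Real.Gamma (x+α) ^ α),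
          mul_assoc, ← Real.rpow_add hg]
        simp

private lemma summable_ml_aux {α C : ℝ} (hα₀ : 0 < α) (hα₁ : α < 1) (hC : 0 < C) :
    Summable (fun n : ℕ => ((n : ℝ) + 1) * C ^ n / Real.Gamma (α * n + 1)) := by
  set a : ℕ → ℝ := fun n => ((n : ℝ) + 1) * C ^ n / Real.Gamma (α * n + 1) with ha
  have hx : ∀ n : ℕ, (0:ℝ) < α * n + 1 := fun n => by positivity
  have hpos : ∀ n : ℕ, 0 < a n := fun n => by
    have := Real.Gamma_pos_of_pos (hx n); positivity
  -- eventual smallness of 8 C (αn+1)^(-α)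
  have htend : Tendsto (fun n : ℕ => 8 * C * (α * n + 1) ^ (-α)) atTop (nhds 0) := by
    have h1 : Tendsto (fun n : ℕ => α * n + 1) atTop atTop :=
      tendsto_atTop_add_const_right _ _ (Tendsto.const_mul_atTop hα₀ tendsto_natCast_atTop_atTop)
    have h2 := (tendsto_rpow_neg_atTop hα₀).comp h1
    have := h2.const_mul (8 * C)
    simpa using this
  have hev : ∀ᶠ n : ℕ in atTop, 8 * C * (α * n + 1) ^ (-α) ≤ 1 :=
    htend.eventually_le_const one_pos
  refine summable_of_ratio_norm_eventually_le (r := 1/2) (by norm_num) ?_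
  filter_upwards [hev] with n hn
  rw [Real.norm_of_nonneg (hpos (n+1)).le, Real.norm_of_nonneg (hpos n).le]
  set x := α * n + 1 with hxdef
  have hx0 : (0:ℝ) < x := hx n
  have hxa : (0:ℝ) < x + α := by linarith
  have hG : 0 < Real.Gamma x := Real.Gamma_pos_of_pos hx0
  have hG' : 0 < Real.Gamma (x + α) := Real.Gamma_pos_of_pos hxa
  have harg : α * ((n:ℝ)+1) + 1 = x + α := by rw [hxdef]; push_cast; ring
  have hA : Real.Gamma x ≤ (x + α) ^ (1 - α) * Real.Gamma (x + α) / x :=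
    (le_div_iff₀ hx0).2 (by rw [mul_comm] ; exact gamma_ratio_aux hα₀ hα₁ hx0)
  have hP : (x + α) ^ (1 - α) ≤ 2 * (x * x ^ (-α)) := by
    have hn0 : (0:ℝ) ≤ α * n := by positivity
    have h2x : x + α ≤ 2 * x := by rw [hxdef]; linarith
    calc (x + α) ^ (1 - α) ≤ (2*x) ^ (1 - α) := by
          apply Real.rpow_le_rpow hxa.le h2x (by linarith)
      _ = 2 ^ (1-α) * x ^ (1-α) := Real.mul_rpow (by norm_num) hx0.le
      _ ≤ 2 * (x * x ^ (-α)) := by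
          have e : x ^ (1-α) = x * x ^ (-α) := by
            rw [show (1:ℝ) - α = 1 + (-α) by ring, Real.rpow_add hx0, Real.rpow_one]
          rw [e]
          have h2 : (2:ℝ) ^ (1-α) ≤ 2 := by
            calc (2:ℝ) ^ (1-α) ≤ 2 ^ (1:ℝ) := Real.rpow_le_rpow_of_exponent_le one_le_two (by linarith)
              _ = 2 := Real.rpow_one 2
          have hxx : 0 ≤ x * x ^ (-α) := by positivity
          nlinarith [Real.rpow_nonneg hx0.le (1-α)]
  have hxne : x ≠ 0 := hx0.ne'
  have hxneg : 0 ≤ x ^ (-α) := Real.rpow_nonneg hx0.le _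
  have hstep : (2:ℝ) * C * x ^ (-α) ≤ 1/4 := by nlinarith
  have hGle : Real.Gamma x ≤ 2 * x ^ (-α) * Real.Gamma (x + α) := by
    calc Real.Gamma x ≤ (x + α) ^ (1 - α) * Real.Gamma (x + α) / x := hA
      _ ≤ (2 * (x * x ^ (-α))) * Real.Gamma (x + α) / x := by gcongr
      _ = 2 * x ^ (-α) * Real.Gamma (x + α) := by field_simp
  simp only [ha]
  push_cast
  rw [show α * ((n:ℝ) + 1) + 1 = x + α by rw [hxdef]; ring, mul_div_assoc',
    div_le_div_iff₀ hG' hG]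
  calc ((n:ℝ) + 1 + 1) * C ^ (n+1) * Real.Gamma x
      ≤ ((n:ℝ) + 1 + 1) * C ^ (n+1) * (2 * x ^ (-α) * Real.Gamma (x + α)) := by gcongr
    _ = ((n:ℝ) + 1 + 1) * C ^ n * (2 * C * x ^ (-α)) * Real.Gamma (x + α) := by ring
    _ ≤ ((n:ℝ) + 1 + 1) * C ^ n * (1/4) * Real.Gamma (x + α) := by gcongr
    _ ≤ 1/2 * (((n:ℝ) + 1) * C ^ n) * Real.Gamma (x + α) := by
        have hcn : (0:ℝ) ≤ C ^ n := by positivity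
        nlinarith [hG'.le, mul_nonneg hcn hG'.le]

/-- The two-parameter Mittag-Leffler function `E_{α,β}(z) = ∑_{k=0}^∞ z^k / Γ(αk + β)`. -/
noncomputable def mittagLeffler (α β : ℝ) (z : ℂ) : ℂ :=
  ∑' k : ℕ, z ^ k / Complex.Gamma (α * k + β)

/-- For `0 < α < 1`, `λ ∈ ℂ` and every `t > 0`, the map `t ↦ E_α(λ t^α)` is
differentiable at `t` with derivative `λ t^{α−1} E_{α,α}(λ t^α)`. -/
theorem hasDerivAt_mittagLeffler (α : ℝ) (hα₀ : 0 < α) (hα₁ : α < 1) (lam : ℂ)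
    (t : ℝ) (ht : 0 < t) :
    HasDerivAt (fun s : ℝ => mittagLeffler α 1 (lam * ((s ^ α : ℝ) : ℂ)))
      (lam * ((t ^ (α - 1) : ℝ) : ℂ) * mittagLeffler α α (lam * ((t ^ α : ℝ) : ℂ))) t := by
  have h2t : (0:ℝ) < 2 * t := by linarith
  have ht2 : (0:ℝ) < t / 2 := by linarith
  have htmem : t ∈ Set.Ioo (t/2) (2*t) := ⟨by linarith, by linarith⟩
  set C : ℝ := max 1 (‖lam‖ * (2*t) ^ α) with hCdef
  have hC1 : (1:ℝ) ≤ C := le_max_left _ _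
  have hC0 : (0:ℝ) < C := lt_of_lt_of_le one_pos hC1
  set D : ℝ := ‖lam‖ * α * (t/2) ^ (α-1) with hDdef
  set g : ℕ → ℝ → ℂ := fun n s => (lam * ((s ^ α : ℝ) : ℂ)) ^ n / Complex.Gamma (↑α * ↑n + 1)
    with hgdef
  set g' : ℕ → ℝ → ℂ := fun n s =>
      (↑n * (lam * ((s ^ α : ℝ) : ℂ)) ^ (n-1) * (lam * ((α * s ^ (α-1) : ℝ) : ℂ))) /
        Complex.Gamma (↑α * ↑n + 1) with hg'def
  set u : ℕ → ℝ := fun n => D * (((n:ℝ)+1) * C ^ n / Real.Gamma (α * n + 1)) with hudef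
  have hGam : ∀ n : ℕ, Complex.Gamma (↑α * ↑n + 1) = ((Real.Gamma (α * n + 1) : ℝ) : ℂ) := by
    intro n
    rw [show (↑α * ↑n + 1 : ℂ) = ((α * n + 1 : ℝ) : ℂ) by push_cast; ring, Complex.Gamma_ofReal]
  have hGampos : ∀ n : ℕ, (0:ℝ) < Real.Gamma (α * n + 1) := fun n =>
    Real.Gamma_pos_of_pos (by positivity)
  -- derivative of each term
  have hg : ∀ (n : ℕ) (y : ℝ), y ∈ Set.Ioo (t/2) (2*t) → HasDerivAt (g n) (g' n y) y := by
    intro n y hy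
    have hy0 : 0 < y := lt_trans ht2 hy.1
    have h1 : HasDerivAt (fun s : ℝ => s ^ α) (α * y ^ (α-1)) y :=
      Real.hasDerivAt_rpow_const (Or.inl hy0.ne')
    have h3 : HasDerivAt (fun s : ℝ => lam * ((s ^ α : ℝ) : ℂ))
        (lam * ((α * y ^ (α-1) : ℝ) : ℂ)) y := h1.ofReal_comp.const_mul lam
    simp only [hgdef, hg'def]
    have h4 := HasDerivAt.comp y (hasDerivAt_pow n (lam * ((y ^ α : ℝ) : ℂ))) h3
    exact h4.div_const _
  -- norm bound
  have hbound : ∀ (n : ℕ) (y : ℝ), y ∈ Set.Ioo (t/2) (2*t) → ‖g' n y‖ ≤ u n := by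
    intro n y hy
    have hy0 : 0 < y := lt_trans ht2 hy.1
    have hw : ‖lam‖ * y ^ α ≤ C := by
      calc ‖lam‖ * y ^ α ≤ ‖lam‖ * (2*t) ^ α := by
            gcongr
            exact hy.2.le
        _ ≤ C := le_max_right _ _
    have hwn : (‖lam‖ * y ^ α) ^ (n-1) ≤ C ^ n := by
      calc (‖lam‖ * y ^ α) ^ (n-1) ≤ C ^ (n-1) := by gcongr
        _ ≤ C ^ n := pow_le_pow_right₀ hC1 (Nat.sub_le n 1)
    have hyexp : y ^ (α-1) ≤ (t/2) ^ (α-1) :=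
      Real.rpow_le_rpow_of_nonpos ht2 hy.1.le (by linarith)
    have hnorm : ‖g' n y‖ = (↑n * (‖lam‖ * y ^ α) ^ (n-1) *
        (‖lam‖ * (α * y ^ (α-1)))) / Real.Gamma (α * n + 1) := by
      simp only [hg'def, norm_div, norm_mul, norm_pow, Complex.norm_natCast, hGam n,
        Complex.norm_real, Real.norm_eq_abs]
      rw [abs_of_nonneg (Real.rpow_nonneg hy0.le α), abs_of_pos hα₀,
        abs_of_nonneg (Real.rpow_nonneg hy0.le (α-1)), abs_of_nonneg (hGampos n).le]
    have hun : u n = (D * (((n:ℝ)+1) * C ^ n)) / Real.Gamma (α * n + 1) := by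
      simp only [hudef]; ring
    rw [hnorm, hun]
    apply (div_le_div_iff_of_pos_right (hGampos n)).mpr
    have e2 : (0:ℝ) ≤ ‖lam‖ * (α * y ^ (α-1)) :=
      mul_nonneg (norm_nonneg _) (mul_nonneg hα₀.le (Real.rpow_nonneg hy0.le _))
    have A1 : (n:ℝ) * (‖lam‖ * y ^ α) ^ (n-1) ≤ ((n:ℝ)+1) * C ^ n :=
      mul_le_mul (by linarith [Nat.cast_nonneg (α := ℝ) n]) hwn (by positivity) (by positivity)
    have A2 : ‖lam‖ * (α * y ^ (α-1)) ≤ ‖lam‖ * (α * (t/2) ^ (α-1)) := by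
      apply mul_le_mul_of_nonneg_left _ (norm_nonneg _)
      exact mul_le_mul_of_nonneg_left hyexp hα₀.le
    calc (n:ℝ) * (‖lam‖ * y ^ α) ^ (n-1) * (‖lam‖ * (α * y ^ (α-1)))
        ≤ (((n:ℝ)+1) * C ^ n) * (‖lam‖ * (α * (t/2) ^ (α-1))) :=
          mul_le_mul A1 A2 e2 (by positivity)
      _ = D * (((n:ℝ)+1) * C ^ n) := by rw [hDdef]; ring
  -- summability of the bound and at the point t
  have hu : Summable u := (summable_ml_aux hα₀ hα₁ hC0).mul_left D
  have hgt : Summable fun n => g n t := by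
    apply Summable.of_norm_bounded (summable_ml_aux hα₀ hα₁ hC0)
    intro n
    have hnorm : ‖g n t‖ = (‖lam‖ * t ^ α) ^ n / Real.Gamma (α * n + 1) := by
      simp only [hgdef, norm_div, norm_mul, norm_pow, hGam n, Complex.norm_real,
        Real.norm_eq_abs]
      rw [abs_of_nonneg (Real.rpow_nonneg ht.le α), abs_of_nonneg (hGampos n).le]
    rw [hnorm]
    apply (div_le_div_iff_of_pos_right (hGampos n)).mpr
    have hwt : ‖lam‖ * t ^ α ≤ C := by
      calc ‖lam‖ * t ^ α ≤ ‖lam‖ * (2*t) ^ α := by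
            gcongr
            linarith
        _ ≤ C := le_max_right _ _
    calc (‖lam‖ * t ^ α) ^ n ≤ C ^ n := by gcongr
      _ ≤ ((n:ℝ)+1) * C ^ n := by nlinarith [pow_pos hC0 n, Nat.cast_nonneg (α := ℝ) n]
  -- main derivative statement
  have main : HasDerivAt (fun y => ∑' n, g n y) (∑' n, g' n t) t :=
    hasDerivAt_tsum_of_isPreconnected hu isOpen_Ioo isPreconnected_Ioo hg hbound htmem hgt htmem
  have hfun : (fun s : ℝ => mittagLeffler α 1 (lam * ((s ^ α : ℝ) : ℂ))) =
      fun y => ∑' n, g n y := by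
    funext s
    unfold mittagLeffler
    simp only [hgdef, Complex.ofReal_one]
  -- compute the sum of derivatives
  have hsum' : Summable fun n => g' n t :=
    Summable.of_norm_bounded hu (fun n => hbound n t htmem)
  have hval : ∑' n, g' n t =
      lam * ((t ^ (α-1) : ℝ) : ℂ) * mittagLeffler α α (lam * ((t ^ α : ℝ) : ℂ)) := by
    rw [Summable.tsum_eq_zero_add hsum']
    have h0 : g' 0 t = 0 := by simp [hg'def]
    rw [h0, zero_add]
    have hterm : ∀ n : ℕ, g' (n+1) t = lam * ((t ^ (α-1) : ℝ) : ℂ) *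
        ((lam * ((t ^ α : ℝ) : ℂ)) ^ n / Complex.Gamma (↑α * ↑n + ↑α)) := by
      intro n
      have hz : (↑α * ↑n + ↑α : ℂ) = ((α * n + α : ℝ) : ℂ) := by push_cast; ring
      have hzpos : (0:ℝ) < α * n + α := by positivity
      have hzne : (↑α * ↑n + ↑α : ℂ) ≠ 0 := by
        rw [hz]; exact_mod_cast hzpos.ne'
      have hGne : Complex.Gamma (↑α * ↑n + ↑α) ≠ 0 := by
        apply Complex.Gamma_ne_zero_of_re_pos
        rw [hz]; simpa using hzpos
      have hGadd : Complex.Gamma (↑α * ↑(n+1) + 1) =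
          (↑α * ↑n + ↑α) * Complex.Gamma (↑α * ↑n + ↑α) := by
        rw [show (↑α * ↑(n+1) + 1 : ℂ) = (↑α * ↑n + ↑α) + 1 by push_cast; ring,
          Complex.Gamma_add_one _ hzne]
      simp only [hg'def]
      rw [hGadd, show (n+1) - 1 = n from rfl,
        show ((α * t ^ (α-1) : ℝ) : ℂ) = ↑α * ((t ^ (α-1) : ℝ) : ℂ) by push_cast; ring]
      have hαne : (α:ℂ) ≠ 0 := by exact_mod_cast hα₀.ne'
      field_simp
      push_cast
      ring
    rw [tsum_congr hterm, tsum_mul_left]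
    rfl
  rw [hfun, ← hval]
  exact main
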